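/- Suppose a connected signed graph G is structurally balanced and its underlying unsigned graph is non-bipartite with aperiodic normalized adjacency. Then P^t = D^{-1/2} P_sym^t D^{1/2} converges as t → ∞ to the rank-one matrix (1/(2m)) 1₁ 1₁^T D, where 1₁ is the ±1 vector of the balanced bipartition and 2m = Σ_j d_j; hence for any initial row vector x(0)^T, the limit of x(0)^T P^t is the vector with j-th entry ±(x(0)^T 1₁) d_j/(2m), with sign + if j ∈ V1 and − if j ∈ V2. -/

import Mathlib

open Filter

open Matrix


lemma pow_entry_nonneg' {n : ℕ} (A : Matrix (Fin n) (Fin n) ℝ) (hA : ∀ i j, 0 ≤ A i j) :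
    ∀ m i j, 0 ≤ (A ^ m) i j := by
  intro m
  induction m with
  | zero =>
    intro i j
    simp only [pow_zero, Matrix.one_apply]
    split_ifs <;> norm_num
  | succ m ih =>
    intro i j
    rw [pow_succ, Matrix.mul_apply]
    exact Finset.sum_nonneg fun k _ => mul_nonneg (ih i k) (hA k j)

lemma harmonic_const' {n : ℕ} (hn : 0 < n) (A : Matrix (Fin n) (Fin n) ℝ)
    (hA : ∀ i j, 0 ≤ A i j)
    (d : Fin n → ℝ) (hdef : ∀ i, d i = ∑ k, A i k)
    (hconn : ∀ i j, ∃ m, (A ^ m) i j ≠ 0)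
    (y : Fin n → ℝ) (hy : ∀ i, ∑ j, A i j * y j = d i * y i) :
    ∃ c, ∀ i, y i = c := by
  haveI : Nonempty (Fin n) := ⟨⟨0, hn⟩⟩
  obtain ⟨i₀, -, hi₀⟩ := Finset.exists_max_image Finset.univ y ⟨⟨0, hn⟩, Finset.mem_univ _⟩
  set M := y i₀ with hM
  have hle : ∀ j, y j ≤ M := fun j => hi₀ j (Finset.mem_univ j)
  have hlocal : ∀ k, y k = M → ∀ j, A k j ≠ 0 → y j = M := by
    intro k hk j hkj
    have hsum : ∑ j, A k j * (M - y j) = 0 := by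
      have h : ∑ j, A k j * (M - y j) = (∑ j, A k j) * M - ∑ j, A k j * y j := by
        rw [Finset.sum_mul, ← Finset.sum_sub_distrib]
        exact Finset.sum_congr rfl fun j _ => by ring
      rw [h, hy k, ← hdef k, hk]
      ring
    have hterm := (Finset.sum_eq_zero_iff_of_nonneg
      (fun j _ => mul_nonneg (hA k j) (sub_nonneg.2 (hle j)))).1 hsum j (Finset.mem_univ j)
    rcases mul_eq_zero.1 hterm with h | h
    · exact absurd h hkj
    · linarith [sub_eq_zero.1 h]
  have hclaim : ∀ m k, (A ^ m) i₀ k ≠ 0 → y k = M := by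
    intro m
    induction m with
    | zero =>
      intro k hk
      simp only [pow_zero, Matrix.one_apply, ne_eq, ite_eq_right_iff, not_forall] at hk
      rw [← hk.1]
    | succ m ih =>
      intro k hk
      rw [pow_succ, Matrix.mul_apply] at hk
      obtain ⟨l, -, hl⟩ := Finset.exists_ne_zero_of_sum_ne_zero hk
      rcases mul_ne_zero_iff.1 hl with ⟨h1, h2⟩
      exact hlocal l (ih l h1) k h2
  refine ⟨M, fun i => ?_⟩
  obtain ⟨m, hm⟩ := hconn i₀ i
  exact hclaim m i hm

lemma conj_pow' {n : ℕ} (U D : Matrix (Fin n) (Fin n) ℝ)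
    (hU : star U * U = 1) (hU' : U * star U = 1) (t : ℕ) :
    (U * D * star U) ^ t = U * D ^ t * star U := by
  induction t with
  | zero => simp [hU']
  | succ t ih =>
    rw [pow_succ, ih, pow_succ]
    rw [show U * D ^ t * star U * (U * D * star U)
        = U * D ^ t * (star U * U) * (D * star U) by simp only [Matrix.mul_assoc]]
    rw [hU, Matrix.mul_one]
    simp only [Matrix.mul_assoc]


/-- For a connected structurally balanced signed graph whose symmetrized
transition matrix has all eigenvalues other than 1 of absolute value < 1
(non-bipartite, aperiodic case), the powers P^t converge to the rank-one matrix
(1/(2m)) 1₁ 1₁ᵀ D, and accordingly x(0)ᵀ P^t converges to the stated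
stationary vector. -/
theorem balanced_random_walk_stationary {n : ℕ} (W : Matrix (Fin n) (Fin n) ℝ)
    (hW : W.IsSymm)
    (d : Fin n → ℝ) (hdef : ∀ i, d i = ∑ k, |W i k|) (hd : ∀ i, 0 < d i)
    (hconn : ∀ i j : Fin n, ∃ m : ℕ, ((Matrix.of fun a b => |W a b|) ^ m) i j ≠ 0)
    (σ : Fin n → ℝ) (hσ : ∀ i, σ i = 1 ∨ σ i = -1)
    (hbal1 : ∀ i j, 0 < W i j → σ i = σ j)
    (hbal2 : ∀ i j, W i j < 0 → σ i ≠ σ j)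
    (haper : ∀ μ ∈ spectrum ℝ
        (Matrix.of fun i j => W i j / (Real.sqrt (d i) * Real.sqrt (d j))),
      μ ≠ 1 → |μ| < 1) :
    Tendsto (fun t : ℕ => (Matrix.of fun i j => W i j / d i) ^ t) atTop
      (nhds (Matrix.of fun i j => σ i * σ j * d j / ∑ k, d k)) ∧
    ∀ x0 : Fin n → ℝ,
      Tendsto (fun t : ℕ => Matrix.vecMul x0 ((Matrix.of fun i j => W i j / d i) ^ t))
        atTop (nhds (fun j => (∑ i, x0 i * σ i) * σ j * d j / ∑ k, d k)) := by
  rcases Nat.eq_zero_or_pos n with h0 | hn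
  · subst h0
    constructor
    · have h : (fun t : ℕ => (Matrix.of fun i j : Fin 0 => W i j / d i) ^ t)
          = fun _ => Matrix.of fun i j : Fin 0 => σ i * σ j * d j / ∑ k, d k := by
        funext t; ext i j; exact i.elim0
      rw [h]; exact tendsto_const_nhds
    · intro x0
      have h : (fun t : ℕ => Matrix.vecMul x0 ((Matrix.of fun i j : Fin 0 => W i j / d i) ^ t))
          = fun _ => (fun j : Fin 0 => (∑ i, x0 i * σ i) * σ j * d j / ∑ k, d k) := by
        funext t; funext j; exact j.elim0
      rw [h]; exact tendsto_const_nhds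
  haveI : Nonempty (Fin n) := ⟨⟨0, hn⟩⟩
  set S : Matrix (Fin n) (Fin n) ℝ :=
    Matrix.of fun i j => W i j / (Real.sqrt (d i) * Real.sqrt (d j)) with hSdef
  set P : Matrix (Fin n) (Fin n) ℝ := Matrix.of fun i j => W i j / d i with hPdef
  set v : Fin n → ℝ := fun i => σ i * Real.sqrt (d i) with hvdef
  set s : ℝ := ∑ k, d k with hsdef
  have hsd : ∀ i, 0 < Real.sqrt (d i) := fun i => Real.sqrt_pos.2 (hd i)
  have hss : ∀ i, Real.sqrt (d i) * Real.sqrt (d i) = d i := fun i => Real.mul_self_sqrt (hd i).le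
  have hσ2 : ∀ i, σ i * σ i = 1 := by intro i; rcases hσ i with h | h <;> rw [h] <;> norm_num
  have hspos : 0 < s := Finset.sum_pos (fun i _ => hd i) Finset.univ_nonempty
  have hbal : ∀ i j, W i j * (σ i * σ j) = |W i j| := by
    intro i j
    rcases lt_trichotomy (W i j) 0 with h | h | h
    · have hne := hbal2 i j h
      have hm1 : σ i * σ j = -1 := by
        rcases hσ i with h1 | h1 <;> rcases hσ j with h2 | h2 <;> simp_all
      rw [hm1, abs_of_neg h]; ring
    · rw [h]; simp
    · rw [hbal1 i j h, hσ2 j, abs_of_pos h, mul_one]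
  have hWσ : ∀ i j, W i j * σ j = |W i j| * σ i := by
    intro i j
    have h1 : W i j * (σ i * σ j) * σ i = W i j * σ j * (σ i * σ i) := by ring
    rw [hbal i j, hσ2 i, mul_one] at h1
    exact h1.symm
  have hS_symm : Sᵀ = S := by
    ext i j
    simp only [transpose_apply, hSdef, Matrix.of_apply]
    rw [hW.apply i j, mul_comm]
  have hHerm : S.IsHermitian := by
    rw [Matrix.IsHermitian, conjTranspose_eq_transpose_of_trivial]
    exact hS_symm
  have hSv : S *ᵥ v = v := by
    funext i
    simp only [Matrix.mulVec, dotProduct]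
    have hterm : ∀ j, S i j * v j = |W i j| * σ i / Real.sqrt (d i) := by
      intro j
      show W i j / (Real.sqrt (d i) * Real.sqrt (d j)) * (σ j * Real.sqrt (d j)) = _
      rw [← hWσ i j]
      field_simp
      rw [mul_right_comm (W i j), mul_div_mul_right _ _ (hsd j).ne']
    rw [Finset.sum_congr rfl fun j _ => hterm j]
    rw [← Finset.sum_div, ← Finset.sum_mul, ← hdef i]
    show d i * σ i / Real.sqrt (d i) = σ i * Real.sqrt (d i)
    rw [mul_comm (d i) (σ i), mul_div_assoc, Real.div_sqrt]
  set U : Matrix (Fin n) (Fin n) ℝ := (hHerm.eigenvectorUnitary : Matrix (Fin n) (Fin n) ℝ)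
    with hUdef
  set eig : Fin n → ℝ := hHerm.eigenvalues with heigdef
  have hU1 : U * star U = 1 := Matrix.mem_unitaryGroup_iff.mp hHerm.eigenvectorUnitary.2
  have hU2 : star U * U = 1 := Matrix.mem_unitaryGroup_iff'.mp hHerm.eigenvectorUnitary.2
  have hspec : S = U * Matrix.diagonal eig * star U := by
    have h := hHerm.spectral_theorem
    simpa [RCLike.ofReal_real_eq_id] using h
  have hpow : ∀ t : ℕ, S ^ t = U * Matrix.diagonal (fun i => eig i ^ t) * star U := by
    intro t
    rw [hspec, conj_pow' U _ hU2 hU1, Matrix.diagonal_pow]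
    rfl
  set ind : Fin n → ℝ := fun i => if eig i = 1 then (1 : ℝ) else 0 with hinddef
  set Q : Matrix (Fin n) (Fin n) ℝ := U * Matrix.diagonal ind * star U with hQdef
  have hcont : Continuous fun x : Fin n → ℝ => U * Matrix.diagonal x * star U :=
    (continuous_const.matrix_mul continuous_id.matrix_diagonal).matrix_mul continuous_const
  have hdiag : Tendsto (fun t : ℕ => fun i => eig i ^ t) atTop (nhds ind) := by
    rw [tendsto_pi_nhds]
    intro i
    by_cases h : eig i = 1
    · simp only [hinddef, h, if_pos, one_pow]
      exact tendsto_const_nhds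
    · have habs : |eig i| < 1 := haper (eig i) (hHerm.eigenvalues_mem_spectrum_real i) h
      simp only [hinddef, h, if_neg, ite_false]
      exact tendsto_pow_atTop_nhds_zero_iff.mpr habs
  have hQt : Tendsto (fun t : ℕ => S ^ t) atTop (nhds Q) := by
    simp only [hpow]
    exact (hcont.tendsto ind).comp hdiag
  have hSQ : S * Q = Q := by
    have h1 : Tendsto (fun t : ℕ => S ^ (t + 1)) atTop (nhds Q) :=
      hQt.comp (tendsto_add_atTop_nat 1)
    have h2 : Tendsto (fun t : ℕ => S * S ^ t) atTop (nhds (S * Q)) :=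
      ((continuous_const.matrix_mul continuous_id).tendsto Q).comp hQt
    simp only [← pow_succ'] at h2
    exact tendsto_nhds_unique h2 h1
  have hQsymm : Qᵀ = Q := by
    have h1 : Tendsto (fun t : ℕ => (S ^ t)ᵀ) atTop (nhds Qᵀ) :=
      (continuous_id.matrix_transpose.tendsto Q).comp hQt
    have heq : ∀ t : ℕ, (S ^ t)ᵀ = S ^ t := fun t => by rw [Matrix.transpose_pow, hS_symm]
    simp only [heq] at h1
    exact tendsto_nhds_unique h1 hQt
  have hQv : Q *ᵥ v = v := by
    have hiter : ∀ t : ℕ, S ^ t *ᵥ v = v := by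
      intro t
      induction t with
      | zero => simp
      | succ t ih => rw [pow_succ', ← Matrix.mulVec_mulVec, ih, hSv]
    have h1 : Tendsto (fun t : ℕ => S ^ t *ᵥ v) atTop (nhds (Q *ᵥ v)) :=
      ((continuous_id.matrix_mulVec continuous_const).tendsto Q).comp hQt
    simp only [hiter] at h1
    exact tendsto_nhds_unique h1 tendsto_const_nhds
  have hsimp : ∀ u : Fin n → ℝ, S *ᵥ u = u → ∃ c, ∀ i, u i = c * v i := by
    intro u hu
    have hu' : ∀ i, ∑ j, S i j * u j = u i := by
      intro i
      have := congrFun hu i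
      simpa [Matrix.mulVec, dotProduct] using this
    have hharm : ∀ i, ∑ j, |W i j| * (σ j * u j / Real.sqrt (d j)) =
        d i * (σ i * u i / Real.sqrt (d i)) := by
      intro i
      have hLHS : ∀ j, |W i j| * (σ j * u j / Real.sqrt (d j)) =
          (S i j * u j) * (σ i * Real.sqrt (d i)) := by
        intro j
        rw [← hbal i j]
        show W i j * (σ i * σ j) * (σ j * u j / Real.sqrt (d j)) =
          W i j / (Real.sqrt (d i) * Real.sqrt (d j)) * u j * (σ i * Real.sqrt (d i))
        have h2 : σ j * σ j = 1 := hσ2 j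
        calc W i j * (σ i * σ j) * (σ j * u j / Real.sqrt (d j))
            = (σ j * σ j) * (W i j * σ i * u j / Real.sqrt (d j)) := by ring
          _ = W i j * σ i * u j / Real.sqrt (d j) := by rw [h2, one_mul]
          _ = W i j / (Real.sqrt (d i) * Real.sqrt (d j)) * u j * (σ i * Real.sqrt (d i)) := by
              rw [mul_comm (Real.sqrt (d i)) (Real.sqrt (d j)), div_mul_eq_mul_div,
                div_mul_eq_mul_div,
                show W i j * u j * (σ i * Real.sqrt (d i)) = W i j * u j * σ i * Real.sqrt (d i)
                  from by ring,
                mul_div_mul_right _ _ (hsd i).ne']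
              ring
      rw [Finset.sum_congr rfl fun j _ => hLHS j, ← Finset.sum_mul, hu' i]
      have : d i * (σ i * u i / Real.sqrt (d i)) = σ i * u i * (d i / Real.sqrt (d i)) := by
        ring
      rw [this, Real.div_sqrt]
      ring
    obtain ⟨c, hc⟩ := harmonic_const' hn (Matrix.of fun a b => |W a b|)
      (fun i j => abs_nonneg _) d hdef hconn (fun j => σ j * u j / Real.sqrt (d j)) hharm
    refine ⟨c, fun i => ?_⟩
    have h1 : σ i * u i / Real.sqrt (d i) = c := hc i
    rw [div_eq_iff (hsd i).ne'] at h1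
    have h2 : u i = σ i * (σ i * u i) := by rw [← mul_assoc, hσ2 i, one_mul]
    rw [h2, h1]
    show σ i * (c * Real.sqrt (d i)) = c * (σ i * Real.sqrt (d i))
    ring
  have hsym : ∀ a b, Q a b = Q b a := by
    intro a b
    conv_lhs => rw [← hQsymm]
    rfl
  have hQR : ∀ i j, Q i j = v i * v j / s := by
    have hcol : ∀ j, ∃ c, ∀ i, Q i j = c * v i := by
      intro j
      refine hsimp (fun i => Q i j) ?_
      funext i
      show ∑ k, S i k * Q k j = Q i j
      rw [← Matrix.mul_apply, hSQ]
    intro i j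
    obtain ⟨c, hc⟩ := hcol j
    have hvv : ∑ k, v k * v k = s := by
      rw [hsdef]
      refine Finset.sum_congr rfl fun k _ => ?_
      show σ k * Real.sqrt (d k) * (σ k * Real.sqrt (d k)) = d k
      rw [mul_mul_mul_comm, hσ2 k, one_mul, hss k]
    have hvQ : ∑ k, Q k j * v k = v j := by
      have h := congrFun hQv j
      simp only [Matrix.mulVec, dotProduct] at h
      calc ∑ k, Q k j * v k = ∑ k, Q j k * v k :=
            Finset.sum_congr rfl fun k _ => by rw [hsym k j]
        _ = v j := h
    have hcs : c * s = v j := by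
      calc c * s = ∑ k, c * v k * v k := by
            rw [← hvv, Finset.mul_sum]
            exact Finset.sum_congr rfl fun k _ => by ring
        _ = ∑ k, Q k j * v k := Finset.sum_congr rfl fun k _ => by rw [hc k]
        _ = v j := hvQ
    rw [hc i, ← hcs]
    field_simp
  set Dp : Matrix (Fin n) (Fin n) ℝ := Matrix.diagonal fun i => Real.sqrt (d i) with hDp
  set Di : Matrix (Fin n) (Fin n) ℝ := Matrix.diagonal fun i => (Real.sqrt (d i))⁻¹ with hDi
  have hDpDi : Dp * Di = 1 := by
    rw [hDp, hDi, Matrix.diagonal_mul_diagonal,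
      show (fun i => Real.sqrt (d i) * (Real.sqrt (d i))⁻¹) = fun _ => (1 : ℝ)
        from funext fun i => mul_inv_cancel₀ (hsd i).ne']
    exact Matrix.diagonal_one
  have hDiDp : Di * Dp = 1 := by
    rw [hDp, hDi, Matrix.diagonal_mul_diagonal,
      show (fun i => (Real.sqrt (d i))⁻¹ * Real.sqrt (d i)) = fun _ => (1 : ℝ)
        from funext fun i => inv_mul_cancel₀ (hsd i).ne']
    exact Matrix.diagonal_one
  have hP : P = Di * S * Dp := by
    ext i j
    rw [hPdef, hDi, hDp, Matrix.mul_diagonal, Matrix.diagonal_mul]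
    show W i j / d i = (Real.sqrt (d i))⁻¹ * (W i j / (Real.sqrt (d i) * Real.sqrt (d j))) *
      Real.sqrt (d j)
    have h1 : (Real.sqrt (d i))⁻¹ * (W i j / (Real.sqrt (d i) * Real.sqrt (d j))) *
        Real.sqrt (d j) = W i j / (Real.sqrt (d i) * Real.sqrt (d i)) := by
      field_simp
      rw [mul_div_mul_right _ _ (hsd j).ne']
    rw [h1, hss i]
  have hPt : ∀ t : ℕ, P ^ t = Di * S ^ t * Dp := by
    intro t
    induction t with
    | zero => rw [pow_zero, pow_zero, Matrix.mul_one, hDiDp]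
    | succ t ih =>
      rw [pow_succ, pow_succ, ih, hP,
        show Di * S ^ t * Dp * (Di * S * Dp) = Di * S ^ t * (Dp * Di) * (S * Dp)
          from by simp only [Matrix.mul_assoc],
        hDpDi, Matrix.mul_one]
      simp only [Matrix.mul_assoc]
  have hLim : Tendsto (fun t : ℕ => P ^ t) atTop (nhds (Di * Q * Dp)) := by
    simp only [hPt]
    exact (((continuous_const.matrix_mul continuous_id).matrix_mul
      continuous_const).tendsto Q).comp hQt
  have hLeq : Di * Q * Dp = Matrix.of fun i j => σ i * σ j * d j / s := by
    ext i j
    rw [hDi, hDp, Matrix.mul_diagonal, Matrix.diagonal_mul, Matrix.of_apply, hQR i j]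
    show (Real.sqrt (d i))⁻¹ * (σ i * Real.sqrt (d i) * (σ j * Real.sqrt (d j)) / s) *
      Real.sqrt (d j) = σ i * σ j * d j / s
    have h1 : (Real.sqrt (d i))⁻¹ * (σ i * Real.sqrt (d i) * (σ j * Real.sqrt (d j)) / s) *
        Real.sqrt (d j) = σ i * σ j * (Real.sqrt (d j) * Real.sqrt (d j)) / s *
        ((Real.sqrt (d i))⁻¹ * Real.sqrt (d i)) := by ring
    rw [h1, hss j, inv_mul_cancel₀ (hsd i).ne', mul_one]
  constructor
  · exact hLeq ▸ hLim
  · intro x0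
    have h1 : Tendsto (fun t : ℕ => x0 ᵥ* P ^ t) atTop
        (nhds (x0 ᵥ* (Matrix.of fun i j => σ i * σ j * d j / s))) := by
      have hc : Continuous fun M : Matrix (Fin n) (Fin n) ℝ => x0 ᵥ* M :=
        continuous_const.matrix_vecMul continuous_id
      have h := (hc.tendsto (Di * Q * Dp)).comp hLim
      rwa [hLeq] at h
    have h2 : x0 ᵥ* (Matrix.of fun i j => σ i * σ j * d j / s)
        = fun j => (∑ i, x0 i * σ i) * σ j * d j / s := by
      funext j
      show ∑ i, x0 i * (σ i * σ j * d j / s) = (∑ i, x0 i * σ i) * σ j * d j / s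
      rw [Finset.sum_mul, Finset.sum_mul, Finset.sum_div]
      exact Finset.sum_congr rfl fun i _ => by ring
    exact h2 ▸ h1
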